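/- arXiv:2303.03980 — 2 statements merged into one kernel-verified Lean document; each statement's English description precedes it below -/
import Mathlib

section
/- Let V be a leafless rooted directed tree and μ=(μ_v)_{v∈V} a weight of nonzero scalars. Suppose the unweighted backward shift B is an operator on ℓ^1(V,μ). Then B is chaotic on ℓ^1(V,μ) if and only if for every v∈V there exists a branch (v,v_1,v_2,…) starting from v such that ∑_{n=1}^∞ |μ_{v_n}| < ∞. -/
open scoped ENNReal NNReal Topology Classical
open Filter

namespace PaperTree

/-! ### Directed trees -/

variable {V : Type*}

/-- Iterated parent map of a directed tree given by a parent function. -/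
def parIter (par : V → Option V) : ℕ → V → Option V
  | 0, v => some v
  | n + 1, v => (par v).bind (parIter par n)

/-- `par` is the parent function of a (countable, connected, acyclic) directed tree on `V`,
in which every vertex has at most one parent and at most one vertex (the root) has none. -/
structure IsDirectedTree (par : V → Option V) : Prop where
  countable : Countable V
  acyclic : ∀ (v : V) (n : ℕ), 0 < n → parIter par n v ≠ some v
  connected : ∀ u v : V, ∃ (m n : ℕ) (w : V), parIter par m u = some w ∧ parIter par n v = some w
  root_unique : ∀ u v : V, par u = none → par v = none → u = v

/-- The set of children of `v`. -/
def children (par : V → Option V) (v : V) : Set V := {u : V | par u = some v}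

/-- The set of descendants of `v` (including `v`); the rooted subtree `V(v)`. -/
def descendants (par : V → Option V) (v : V) : Set V := {u : V | ∃ n : ℕ, parIter par n u = some v}

def IsLeafV (par : V → Option V) (v : V) : Prop := children par v = ∅

def Leafless (par : V → Option V) : Prop := ∀ v : V, children par v ≠ ∅

def IsRoot (par : V → Option V) (v : V) : Prop := par v = none

def Rooted (par : V → Option V) : Prop := ∃ v : V, IsRoot par v

def Unrooted (par : V → Option V) : Prop := ∀ v : V, par v ≠ none

/-- The tree has a free left end: some vertex all of whose (proper) ancestors
have exactly one child. -/
def HasFreeLeftEnd (par : V → Option V) : Prop :=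
  ∃ v : V, ∀ n : ℕ, 1 ≤ n → ∀ w : V, parIter par n v = some w → ∃! u : V, u ∈ children par w

/-- The tree has finite length (all branches have uniformly bounded length). -/
def FiniteLength (par : V → Option V) : Prop := ∃ m : ℕ, ∀ u : V, parIter par (m + 1) u = none

/-- Product of the weights along the upward path of length `n` ending at `u`;
for `u ∈ Chi^n(v)` this is `λ(v → u)`, and `pathProd par lam n v = λ(par^n(v) → v)`. -/
def pathProd {𝕜 : Type*} [Monoid 𝕜] (par : V → Option V) (lam : V → 𝕜) : ℕ → V → 𝕜
  | 0, _ => 1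
  | n + 1, u => lam u * ((par u).elim 1 (pathProd par lam n))

/-- A (finite or infinite, maximal) branch starting at `v`, encoded with `Option`. -/
def IsOptBranch (par : V → Option V) (v : V) (b : ℕ → Option V) : Prop :=
  b 0 = some v ∧
  (∀ (k : ℕ) (w : V), b k = some w →
      (children par w = ∅ ∧ b (k + 1) = none) ∨ ∃ u ∈ children par w, b (k + 1) = some u) ∧
  ∀ k : ℕ, b k = none → b (k + 1) = none

/-- An infinite branch starting at `v` (adequate for leafless trees). -/
def IsBranch (par : V → Option V) (v : V) (b : ℕ → V) : Prop :=
  b 0 = v ∧ ∀ k : ℕ, b (k + 1) ∈ children par (b k)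

/-- The `[0,∞]`-valued absolute weight associated with a scalar weight. -/
noncomputable def nw {𝕜 : Type*} [RCLike 𝕜] (μ : V → 𝕜) : V → ℝ≥0∞ := fun v => (‖μ v‖₊ : ℝ≥0∞)

/-! ### Linear dynamics -/

section Dynamics

variable {𝕜 : Type*} [RCLike 𝕜] {X : Type*} [AddCommGroup X] [Module 𝕜 X] [TopologicalSpace X]

/-- An operator is hypercyclic if some vector has dense orbit. -/
def Hypercyclic (T : X →L[𝕜] X) : Prop :=
  ∃ x : X, Dense (Set.range fun n : ℕ => (T ^ n) x)

/-- A periodic point of the operator `T`. -/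
def IsPeriodicPoint (T : X →L[𝕜] X) (x : X) : Prop :=
  ∃ N : ℕ, 1 ≤ N ∧ (T ^ N) x = x

/-- An operator is chaotic if it is hypercyclic and has a dense set of periodic points. -/
def ChaoticOp (T : X →L[𝕜] X) : Prop :=
  Hypercyclic T ∧ Dense {x : X | IsPeriodicPoint T x}

/-- Topological mixing. -/
def MixingOp (T : X →L[𝕜] X) : Prop :=
  ∀ U₁ U₂ : Set X, IsOpen U₁ → IsOpen U₂ → U₁.Nonempty → U₂.Nonempty →
    ∃ m : ℕ, ∀ n : ℕ, m ≤ n → ((⇑(T ^ n)) '' U₁ ∩ U₂).Nonempty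

/-- Weak mixing: `T ⊕ T` is hypercyclic on `X × X`. -/
def WeaklyMixingOp (T : X →L[𝕜] X) : Prop :=
  Hypercyclic (T.prodMap T)

variable {V : Type*}

/-- `T` is (a representation via the coefficient embedding `ι` of) the weighted backward
shift `B_λ` as an operator on `X`: for every `x ∈ X` and every vertex `v` the defining
series converges unconditionally to the `v`-th coefficient of `T x`. -/
def IsShiftRep (par : V → Option V) (lam : V → 𝕜) (ι : X →ₗ[𝕜] V → 𝕜) (T : X →L[𝕜] X) : Prop :=
  ∀ (x : X) (v : V), HasSum (fun u : ↥(children par v) => lam u.1 * ι x u.1) (ι (T x) v)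

end Dynamics

/-! ### Concrete sequence spaces `ℓ^p(V, μ)` and `c₀(V, μ)`, up to isometry -/

section SpaceRep

variable {𝕜 : Type*} [RCLike 𝕜] {V : Type*} {X : Type*} [NormedAddCommGroup X] [NormedSpace 𝕜 X]

/-- `X` is (an isometric copy of) the weighted space `ℓ^p(V, μ)`, the identification being
given by the coefficient embedding `ι`. -/
def IsLpSpaceRep (ι : X →ₗ[𝕜] V → 𝕜) (μ : V → 𝕜) (p : ℝ) : Prop :=
  Function.Injective ι ∧
  (∀ f : V → 𝕜, (∑' v : V, (‖f v * μ v‖₊ : ℝ≥0∞) ^ p) < ⊤ ↔ f ∈ Set.range ι) ∧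
  ∀ x : X, (‖x‖₊ : ℝ≥0∞) = (∑' v : V, (‖ι x v * μ v‖₊ : ℝ≥0∞) ^ p) ^ (1 / p)

/-- `X` is (an isometric copy of) the weighted space `c₀(V, μ)`. -/
def IsC0SpaceRep (ι : X →ₗ[𝕜] V → 𝕜) (μ : V → 𝕜) : Prop :=
  Function.Injective ι ∧
  (∀ f : V → 𝕜, (∀ ε : ℝ, 0 < ε → {v : V | ε ≤ ‖f v * μ v‖}.Finite) ↔ f ∈ Set.range ι) ∧
  ∀ x : X, (‖x‖₊ : ℝ≥0∞) = ⨆ v : V, (‖ι x v * μ v‖₊ : ℝ≥0∞)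

end SpaceRep

section TreeAux

variable {V : Type*} {par : V → Option V}

lemma parIter_add (m n : ℕ) (u : V) :
    parIter par (m + n) u = (parIter par m u).bind (parIter par n) := by
  induction m generalizing u with
  | zero => simp [parIter]
  | succ m ih =>
    have h1 : m + 1 + n = (m + n) + 1 := by omega
    rw [h1]
    show (par u).bind (parIter par (m + n)) = ((par u).bind (parIter par m)).bind (parIter par n)
    cases par u with
    | none => rfl
    | some w => simpa using ih w

lemma parIter_one (u : V) : parIter par 1 u = par u := by
  show (par u).bind (parIter par 0) = par u
  cases par u <;> rfl

lemma parIter_succ' (n : ℕ) (u : V) :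
    parIter par (n + 1) u = (parIter par n u).bind par := by
  rw [parIter_add n 1 u]
  cases parIter par n u with
  | none => rfl
  | some w => simpa using parIter_one w

lemma parIter_none_of {n : ℕ} {u : V} (h : parIter par n u = none) {k : ℕ} (hk : n ≤ k) :
    parIter par k u = none := by
  obtain ⟨j, rfl⟩ := Nat.exists_eq_add_of_le hk
  rw [parIter_add, h]; rfl

open scoped ENNReal in
lemma tsum_ite_const_of_unique {V : Type*} (c : ℝ≥0∞) {P : V → Prop}
    (hu : ∀ a b, P a → P b → a = b) :
    ∑' u, (if P u then c else 0) = if ∃ u, P u then c else 0 := by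
  by_cases h : ∃ u, P u
  · obtain ⟨a, ha⟩ := h
    rw [tsum_eq_single a (fun b hb => by rw [if_neg (fun hPb => hb (hu b a hPb ha))]),
      if_pos ha, if_pos ⟨a, ha⟩]
  · rw [if_neg h]
    have h0 : ∀ u, (if P u then c else 0) = 0 := fun u => if_neg (fun hp => h ⟨u, hp⟩)
    simp [h0]

end TreeAux
section Flow

open scoped ENNReal

variable {V : Type*} {par : V → Option V}

lemma desc_self (u : V) : u ∈ descendants par u := ⟨0, rfl⟩

/-- membership in a proper descendant set factors uniquely through a child -/
lemma desc_step (hTree : IsDirectedTree par) (u w : V) :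
    (w ∈ descendants par u ∧ w ≠ u) ↔ ∃ u', par u' = some u ∧ w ∈ descendants par u' := by
  constructor
  · rintro ⟨⟨n, hn⟩, hne⟩
    cases n with
    | zero => exact absurd (Option.some.inj hn) hne
    | succ k =>
      rw [parIter_succ'] at hn
      cases hk : parIter par k w with
      | none => rw [hk] at hn; exact absurd hn (by simp)
      | some u' =>
        rw [hk] at hn
        exact ⟨u', hn, ⟨k, hk⟩⟩
  · rintro ⟨u', hpar, k, hk⟩
    have hmem : parIter par (k + 1) w = some u := by
      rw [parIter_succ', hk]; exact hpar
    refine ⟨⟨k + 1, hmem⟩, ?_⟩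
    rintro rfl
    exact hTree.acyclic w (k + 1) (by omega) hmem

lemma desc_unique (hTree : IsDirectedTree par) (u w : V) :
    ∀ a b, (par a = some u ∧ w ∈ descendants par a) → (par b = some u ∧ w ∈ descendants par b) →
      a = b := by
  rintro a b ⟨hpa, na, hna⟩ ⟨hpb, nb, hnb⟩
  -- wlog na ≤ nb
  have key : ∀ a b : V, ∀ na nb : ℕ, na ≤ nb → par a = some u → par b = some u →
      parIter par na w = some a → parIter par nb w = some b → a = b := by
    intro a b na nb hle hpa hpb hna hnb
    obtain ⟨c, rfl⟩ := Nat.exists_eq_add_of_le hle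
    rw [parIter_add, hna] at hnb
    simp only [Option.bind_some] at hnb
    cases c with
    | zero => exact Option.some.inj hnb
    | succ c' =>
      exfalso
      -- parIter (c'+1) a = some b, par a = some u, par b = some u
      have h1 : parIter par (c' + 1 + 1) a = some u := by
        rw [parIter_succ' (c' + 1), hnb]; exact hpb
      have h2 : parIter par (c' + 1 + 1) a = parIter par (c' + 1) u := by
        have : c' + 1 + 1 = 1 + (c' + 1) := by omega
        rw [this, parIter_add, parIter_one, hpa]; rfl
      exact hTree.acyclic u (c' + 1) (by omega) (h2 ▸ h1)
  rcases le_total na nb with h | h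
  · exact key a b na nb h hpa hpb hna hnb
  · exact (key b a nb na h hpb hpa hnb hna).symm

private lemma ite_tsum_push {W : Type*} {P : Prop} [Decidable P] (g : W → ℝ≥0∞) :
    (if P then (∑' w, g w) else 0) = ∑' w, (if P then g w else 0) := by
  by_cases h : P <;> simp [h]

/-- Key extraction: a positive superinvariant mass distribution with finite weighted total
yields a branch with summable weights. -/
lemma flow_branch (hTree : IsDirectedTree par) (m Z : V → ℝ≥0∞)
    (hZtop : ∀ u, Z u ≠ ⊤)
    (hfin : (∑' u, Z u * m u) ≠ ⊤)
    (hch : ∀ u, (∑' u', if par u' = some u then Z u' else 0) ≠ ⊤)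
    (hsuper : ∀ u, Z u ≤ ∑' u', (if par u' = some u then Z u' else 0))
    (v : V) (hv : Z v ≠ 0) :
    ∃ b : ℕ → V, IsBranch par v b ∧ (∑' n, m (b n)) ≠ ⊤ := by
  classical
  set W : V → ℝ≥0∞ := fun u => ∑' w, (if w ∈ descendants par u then Z w * m w else 0) with hW
  have hWapp : ∀ t, W t = ∑' w, (if w ∈ descendants par t then Z w * m w else 0) := fun t => rfl
  have hWle : ∀ u, W u ≤ ∑' w, Z w * m w := fun u =>
    Summable.tsum_le_tsum (fun w => by split <;> simp) ENNReal.summable ENNReal.summable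
  have hWtop : ∀ u, W u ≠ ⊤ := fun u => fun h => hfin (top_le_iff.mp (h ▸ hWle u))
  -- recursion for W
  have hWrec : ∀ u, W u = Z u * m u + ∑' u', (if par u' = some u then W u' else 0) := by
    intro u
    have step1 : (∑' u', (if par u' = some u then W u' else 0))
        = ∑' w, (if w ∈ descendants par u ∧ w ≠ u then Z w * m w else 0) := by
      have e1 : ∀ u' : V, (if par u' = some u then W u' else 0)
          = ∑' w, (if par u' = some u ∧ w ∈ descendants par u' then Z w * m w else 0) := by
        intro u'
        by_cases h : par u' = some u
        · rw [if_pos h, hWapp]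
          exact tsum_congr fun w => by by_cases h2 : w ∈ descendants par u' <;> simp [h, h2]
        · rw [if_neg h]
          exact ((tsum_congr fun w => by simp [h]).trans tsum_zero).symm
      calc (∑' u', (if par u' = some u then W u' else 0))
          = ∑' (u' : V) (w : V), (if par u' = some u ∧ w ∈ descendants par u' then Z w * m w else 0) := by
            exact tsum_congr e1
        _ = ∑' (w : V) (u' : V), (if par u' = some u ∧ w ∈ descendants par u' then Z w * m w else 0) :=
            ENNReal.tsum_comm
        _ = ∑' w, (if w ∈ descendants par u ∧ w ≠ u then Z w * m w else 0) := by
            refine tsum_congr fun w => ?_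
            have H := (tsum_ite_const_of_unique (Z w * m w) (desc_unique hTree u w)).trans
              (if_congr ((desc_step hTree u w).symm) rfl rfl)
            convert H using 2
            funext u'
            congr
    rw [step1, hWapp u]
    have e2 : ∀ w, (if w ∈ descendants par u then Z w * m w else 0)
        = (if w = u then Z w * m w else 0)
          + (if w ∈ descendants par u ∧ w ≠ u then Z w * m w else 0) := by
      intro w
      by_cases h1 : w = u
      · subst h1; simp [desc_self]
      · by_cases h2 : w ∈ descendants par u <;> simp [h1, h2]
    calc (∑' w, (if w ∈ descendants par u then Z w * m w else 0))
        = ∑' w, ((if w = u then Z w * m w else 0)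
            + (if w ∈ descendants par u ∧ w ≠ u then Z w * m w else 0)) := tsum_congr e2
      _ = (∑' w, (if w = u then Z w * m w else 0))
            + ∑' w, (if w ∈ descendants par u ∧ w ≠ u then Z w * m w else 0) :=
          ENNReal.tsum_add
      _ = Z u * m u + ∑' w, (if w ∈ descendants par u ∧ w ≠ u then Z w * m w else 0) := by
          congr 1
          exact (tsum_eq_single u (fun b hb => if_neg hb)).trans (if_pos rfl)
  -- choice step
  have hstep : ∀ u : V, Z u ≠ 0 → ∃ u', par u' = some u ∧ Z u' ≠ 0 ∧
      W u' * Z u + (Z u * m u) * Z u' ≤ W u * Z u' := by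
    intro u hu
    by_contra hcon
    push_neg at hcon
    obtain ⟨f, hfd⟩ : ∃ f : V → ℝ≥0∞, ∀ u',
        f u' = if par u' = some u then W u * Z u' else 0 := ⟨_, fun _ => rfl⟩
    obtain ⟨g, hgd⟩ : ∃ g : V → ℝ≥0∞, ∀ u',
        g u' = if par u' = some u then W u' * Z u + (Z u * m u) * Z u' else 0 :=
      ⟨_, fun _ => rfl⟩
    have hfle : ∀ u', f u' ≤ g u' := by
      intro u'
      rw [hfd, hgd]
      by_cases h : par u' = some u
      · rw [if_pos h, if_pos h]
        by_cases hz : Z u' = 0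
        · simp [hz]
        · exact (hcon u' h hz).le
      · rw [if_neg h, if_neg h]
    have hex : ∃ u₀, (if par u₀ = some u then Z u₀ else 0) ≠ 0 := by
      by_contra hall
      push_neg at hall
      have h0 : (∑' u', if par u' = some u then Z u' else 0) = 0 := by
        simp only [hall]; exact tsum_zero
      exact hu (le_antisymm (h0 ▸ hsuper u) bot_le)
    obtain ⟨u₀, hu₀⟩ := hex
    have hpar₀ : par u₀ = some u := by
      by_contra h; rw [if_neg h] at hu₀; exact hu₀ rfl
    have hZ₀ : Z u₀ ≠ 0 := by rw [if_pos hpar₀] at hu₀; exact hu₀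
    have hstrict : f u₀ < g u₀ := by
      rw [hfd, hgd, if_pos hpar₀, if_pos hpar₀]; exact hcon u₀ hpar₀ hZ₀
    have hfsum : tsum f = W u * ∑' u', (if par u' = some u then Z u' else 0) := by
      rw [← ENNReal.tsum_mul_left]
      refine tsum_congr fun u' => ?_
      rw [hfd]; by_cases h : par u' = some u <;> simp [h]
    have hftop : tsum f ≠ ⊤ := by
      rw [hfsum]; exact ENNReal.mul_ne_top (hWtop u) (hch u)
    have hlt := ENNReal.tsum_lt_tsum hftop hfle hstrict
    have hgsum : tsum g = (∑' u', (if par u' = some u then W u' else 0)) * Z u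
        + (Z u * m u) * ∑' u', (if par u' = some u then Z u' else 0) := by
      rw [← ENNReal.tsum_mul_right, ← ENNReal.tsum_mul_left, ← ENNReal.tsum_add]
      refine tsum_congr fun u' => ?_
      rw [hgd]; by_cases h : par u' = some u <;> simp [h]
    rw [hfsum, hgsum] at hlt
    have hge : (∑' u', (if par u' = some u then W u' else 0)) * Z u
        + (Z u * m u) * (∑' u', (if par u' = some u then Z u' else 0))
        ≤ W u * (∑' u', (if par u' = some u then Z u' else 0)) := by
      conv_rhs => rw [hWrec u]
      rw [add_mul]
      rw [add_comm]
      gcongr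
      exact hsuper u
    exact absurd hlt (not_lt.mpr hge)
  -- build the branch
  have hstep' : ∀ u : {u : V // Z u ≠ 0}, ∃ u' : {u' : V // Z u' ≠ 0},
      par u'.1 = some u.1 ∧
      W u'.1 * Z u.1 + (Z u.1 * m u.1) * Z u'.1 ≤ W u.1 * Z u'.1 := by
    rintro ⟨u, hu⟩
    obtain ⟨u', h1, h2, h3⟩ := hstep u hu
    exact ⟨⟨u', h2⟩, h1, h3⟩
  choose nxt hnxt1 hnxt2 using hstep'
  set bb : ℕ → {u : V // Z u ≠ 0} := fun n => nxt^[n] ⟨v, hv⟩ with hbb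
  have hbsucc : ∀ n, bb (n + 1) = nxt (bb n) := fun n => Function.iterate_succ_apply' nxt n _
  refine ⟨fun n => (bb n).1, ⟨rfl, fun k => ?_⟩, ?_⟩
  · show par (bb (k+1)).1 = some (bb k).1
    rw [hbsucc]; exact hnxt1 (bb k)
  · -- telescoping
    obtain ⟨R, hRd⟩ : ∃ R : ℕ → ℝ≥0∞, ∀ n, R n = W (bb n).1 / Z (bb n).1 := ⟨_, fun _ => rfl⟩
    have hRtop : ∀ n, R n ≠ ⊤ := fun n => by
      rw [hRd]; exact (ENNReal.div_lt_top (hWtop _) (bb n).2).ne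
    have hkey : ∀ n, R (n + 1) + m (bb n).1 ≤ R n := by
      intro n
      have h3 := hnxt2 (bb n)
      rw [← hbsucc] at h3
      set Zn := Z (bb n).1
      set Zn' := Z (bb (n+1)).1
      set Wn := W (bb n).1
      set Wn' := W (bb (n+1)).1
      have hZn0 : Zn ≠ 0 := (bb n).2
      have hZn't : Zn' ≠ ⊤ := hZtop _
      have hZn'0 : Zn' ≠ 0 := (bb (n+1)).2
      have hZnt : Zn ≠ ⊤ := hZtop _
      rw [hRd, hRd]
      rw [ENNReal.le_div_iff_mul_le (Or.inl hZn0) (Or.inl hZnt)]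
      rw [← ENNReal.mul_le_mul_iff_left hZn'0 hZn't]
      calc (Wn' / Zn' + m (bb n).1) * Zn * Zn'
          = (Wn' / Zn' * Zn') * Zn + (Zn * m (bb n).1) * Zn' := by ring
        _ = Wn' * Zn + (Zn * m (bb n).1) * Zn' := by
            rw [ENNReal.div_mul_cancel hZn'0 hZn't]
        _ ≤ Wn * Zn' := h3
    have htel : ∀ K, (∑ n ∈ Finset.range K, m (bb n).1) + R K ≤ R 0 := by
      intro K
      induction K with
      | zero => simp
      | succ K ih =>
        calc (∑ n ∈ Finset.range (K+1), m (bb n).1) + R (K+1)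
            = (∑ n ∈ Finset.range K, m (bb n).1) + (R (K+1) + m (bb K).1) := by
              rw [Finset.sum_range_succ]; ring
          _ ≤ (∑ n ∈ Finset.range K, m (bb n).1) + R K := by gcongr; exact hkey K
          _ ≤ R 0 := ih
    have hsum_le : (∑' n, m (bb n).1) ≤ R 0 := by
      rw [ENNReal.tsum_eq_iSup_sum]
      refine iSup_le fun s => ?_
      obtain ⟨K, hK⟩ := s.exists_nat_subset_range
      calc (∑ n ∈ s, m (bb n).1) ≤ ∑ n ∈ Finset.range K, m (bb n).1 :=
            Finset.sum_le_sum_of_subset hK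
        _ ≤ R 0 := le_trans (le_add_of_nonneg_right bot_le) (htel K)
    exact fun h => hRtop 0 (top_le_iff.mp (h ▸ hsum_le))

end Flow
section Space

open scoped ENNReal NNReal

variable {𝕜 : Type*} [RCLike 𝕜] {V : Type*} {X : Type*} [NormedAddCommGroup X]
  [NormedSpace 𝕜 X] {μ : V → 𝕜} {ι : X →ₗ[𝕜] V → 𝕜}

lemma l1_norm (hX : IsLpSpaceRep ι μ 1) (x : X) :
    (‖x‖₊ : ℝ≥0∞) = ∑' w, (‖ι x w * μ w‖₊ : ℝ≥0∞) := by
  have h := hX.2.2 x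
  simpa [ENNReal.rpow_one] using h

lemma l1_fin (hX : IsLpSpaceRep ι μ 1) (x : X) :
    (∑' w, (‖ι x w * μ w‖₊ : ℝ≥0∞)) ≠ ⊤ := by
  rw [← l1_norm hX x]; exact ENNReal.coe_ne_top

lemma coeff_ennorm_le (hX : IsLpSpaceRep ι μ 1) (x : X) (w : V) :
    (‖ι x w‖₊ : ℝ≥0∞) * (‖μ w‖₊ : ℝ≥0∞) ≤ (‖x‖₊ : ℝ≥0∞) := by
  rw [l1_norm hX x]
  calc (‖ι x w‖₊ : ℝ≥0∞) * (‖μ w‖₊ : ℝ≥0∞) = (‖ι x w * μ w‖₊ : ℝ≥0∞) := by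
        rw [nnnorm_mul, ENNReal.coe_mul]
    _ ≤ _ := ENNReal.le_tsum w

lemma coeff_norm_le (hX : IsLpSpaceRep ι μ 1) (x : X) (w : V) :
    ‖ι x w‖ * ‖μ w‖ ≤ ‖x‖ := by
  have h := coeff_ennorm_le hX x w
  rw [← ENNReal.coe_mul] at h
  have h2 := ENNReal.coe_le_coe.mp h
  calc ‖ι x w‖ * ‖μ w‖ = ((‖ι x w‖₊ * ‖μ w‖₊ : ℝ≥0) : ℝ) := by
        push_cast; rfl
    _ ≤ ((‖x‖₊ : ℝ≥0) : ℝ) := by exact_mod_cast h2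
    _ = ‖x‖ := rfl

lemma mem_range_of_fin (hX : IsLpSpaceRep ι μ 1) {f : V → 𝕜}
    (hf : (∑' w, (‖f w * μ w‖₊ : ℝ≥0∞)) ≠ ⊤) : ∃ x : X, ι x = f := by
  have := (hX.2.1 f).mp (by simpa [ENNReal.rpow_one, lt_top_iff_ne_top] using hf)
  obtain ⟨x, hx⟩ := this
  exact ⟨x, hx⟩

lemma exists_sing (hX : IsLpSpaceRep ι μ 1) (u : V) (c : 𝕜) :
    ∃ x : X, ι x = fun w => if w = u then c else 0 := by
  refine mem_range_of_fin hX ?_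
  have h : (∑' w, (‖(if w = u then c else 0) * μ w‖₊ : ℝ≥0∞))
      = (‖c * μ u‖₊ : ℝ≥0∞) := by
    refine (tsum_eq_single u fun b hb => ?_).trans (by rw [if_pos rfl])
    rw [if_neg hb]; simp
  rw [h]; exact ENNReal.coe_ne_top

lemma norm_of_single (hX : IsLpSpaceRep ι μ 1) {x : X} {u : V} {c : 𝕜}
    (h : ι x = fun w => if w = u then c else 0) :
    (‖x‖₊ : ℝ≥0∞) = (‖c‖₊ : ℝ≥0∞) * (‖μ u‖₊ : ℝ≥0∞) := by
  have h' : ∀ w, (‖ι x w * μ w‖₊ : ℝ≥0∞) = if w = u then (‖c‖₊ * ‖μ u‖₊ : ℝ≥0∞) else 0 := by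
    intro w
    have hw := congrFun h w
    by_cases h2 : w = u
    · subst h2; rw [if_pos rfl] at hw ⊢; rw [hw, nnnorm_mul, ENNReal.coe_mul]
    · rw [if_neg h2] at hw ⊢; rw [hw]; simp
  rw [l1_norm hX x, tsum_congr h', tsum_eq_single u (fun b hb => if_neg hb), if_pos rfl]

lemma norm_of_single' (hX : IsLpSpaceRep ι μ 1) {x : X} {u : V} {c : 𝕜}
    (h : ι x = fun w => if w = u then c else 0) :
    ‖x‖ = ‖c‖ * ‖μ u‖ := by
  have h2 := norm_of_single hX h
  rw [← ENNReal.coe_mul] at h2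
  have := ENNReal.coe_injective h2
  calc ‖x‖ = ((‖x‖₊ : ℝ≥0) : ℝ) := rfl
    _ = ((‖c‖₊ * ‖μ u‖₊ : ℝ≥0) : ℝ) := by rw [this]
    _ = ‖c‖ * ‖μ u‖ := by push_cast; rfl

lemma shift_coeff {par : V → Option V} {T : X →L[𝕜] X}
    (hT : IsShiftRep par (fun _ : V => (1 : 𝕜)) ι T) (x : X) (v : V) :
    HasSum (fun u : ↥(children par v) => ι x u.1) (ι (T x) v) := by
  simpa using hT x v

lemma shift_single {par : V → Option V} {T : X →L[𝕜] X}
    (hT : IsShiftRep par (fun _ : V => (1 : 𝕜)) ι T) {x : X} {u : V} {c : 𝕜}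
    (hx : ι x = fun w => if w = u then c else 0) (w : V) :
    ι (T x) w = if par u = some w then c else 0 := by
  have h1 := shift_coeff hT x w
  rw [hx] at h1
  have h2 : HasSum (fun u' : ↥(children par w) => if u'.1 = u then c else 0)
      (if par u = some w then c else 0) := by
    by_cases h : par u = some w
    · rw [if_pos h]
      have he : (fun u' : ↥(children par w) => if u'.1 = u then c else 0)
          = fun u' => if u' = (⟨u, h⟩ : ↥(children par w)) then c else 0 := by
        funext u'
        congr 1
        rw [eq_iff_iff, Subtype.ext_iff]
    
      rw [he]
      exact hasSum_ite_eq _ _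
    · rw [if_neg h]
      have he : (fun u' : ↥(children par w) => if u'.1 = u then c else 0)
          = fun _ => (0 : 𝕜) := by
        funext u'
        rw [if_neg]
        rintro rfl
        exact h u'.2
      rw [he]
      exact hasSum_zero
  exact h1.unique h2

lemma enorm_hasSum_le {I : Type*} {E : Type*} [NormedAddCommGroup E] {f : I → E} {s : E}
    (h : HasSum f s) : (‖s‖₊ : ℝ≥0∞) ≤ ∑' i, (‖f i‖₊ : ℝ≥0∞) := by
  by_cases hfin : (∑' i, (‖f i‖₊ : ℝ≥0∞)) = ⊤
  · rw [hfin]; exact le_top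
  · have hsum : Summable fun i => ‖f i‖₊ := ENNReal.tsum_coe_ne_top_iff_summable.mp hfin
    rw [← ENNReal.coe_tsum hsum]
    exact_mod_cast (h.tsum_eq ▸ nnnorm_tsum_le hsum)

lemma enorm_tsum_le {I : Type*} {E : Type*} [NormedAddCommGroup E] [CompleteSpace E]
    {f : I → E} (h : Summable f) :
    (‖∑' i, f i‖₊ : ℝ≥0∞) ≤ ∑' i, (‖f i‖₊ : ℝ≥0∞) := enorm_hasSum_le h.hasSum

lemma norm_lt_of_ennreal {E : Type*} [NormedAddCommGroup E] {y : E} {r : ℝ}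
    (h : (‖y‖₊ : ℝ≥0∞) < ENNReal.ofReal r) : ‖y‖ < r := by
  rcases le_or_gt r 0 with hr | hr
  · rw [ENNReal.ofReal_eq_zero.mpr hr] at h
    exact absurd h (by simp)
  · have := (ENNReal.toReal_lt_toReal ENNReal.coe_ne_top ENNReal.ofReal_ne_top).mpr h
    rwa [ENNReal.coe_toReal, coe_nnnorm, ENNReal.toReal_ofReal hr.le] at this

lemma tsum_split_finset {V : Type*} (f : V → ℝ≥0∞) (F : Finset V) :
    (∑' w, f w) = (∑ w ∈ F, f w) + ∑' w, (if w ∈ F then 0 else f w) := by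
  have h1 : ∀ w, f w = (if w ∈ F then f w else 0) + (if w ∈ F then 0 else f w) := by
    intro w; by_cases h : w ∈ F <;> simp [h]
  calc (∑' w, f w) = ∑' w, ((if w ∈ F then f w else 0) + (if w ∈ F then 0 else f w)) :=
        tsum_congr h1
    _ = (∑' w, (if w ∈ F then f w else 0)) + ∑' w, (if w ∈ F then 0 else f w) :=
        ENNReal.tsum_add
    _ = (∑ w ∈ F, f w) + ∑' w, (if w ∈ F then 0 else f w) := by
        congr 1
        rw [tsum_eq_sum (s := F) (fun b hb => if_neg hb)]
        exact Finset.sum_congr rfl fun b hb => if_pos hb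

lemma tail_small {V : Type*} {f : V → ℝ≥0∞} (hf : (∑' w, f w) ≠ ⊤) {ε : ℝ≥0∞} (hε : ε ≠ 0) :
    ∃ F : Finset V, (∑' w, (if w ∈ F then 0 else f w)) < ε := by
  by_cases h0 : (∑' w, f w) = 0
  · refine ⟨∅, ?_⟩
    have : (∑' w, (if w ∈ (∅ : Finset V) then 0 else f w)) = ∑' w, f w := by
      refine tsum_congr fun w => by simp
    rw [this, h0]
    exact pos_iff_ne_zero.mpr hε
  · set t := ∑' w, f w with ht
    set ε' := min ε t with hε'
    have hε'0 : ε' ≠ 0 := by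
      simp only [hε', ne_eq, min_eq_iff]
      intro h
      rcases h with ⟨h, _⟩ | ⟨h, _⟩
      · exact hε h
      · exact h0 h
    have hε't : ε' ≤ t := min_le_right _ _
    have hlt : t - ε' < t := ENNReal.sub_lt_self hf h0 hε'0
    have hiSup : t = ⨆ s : Finset V, ∑ a ∈ s, f a := ht.trans ENNReal.tsum_eq_iSup_sum
    obtain ⟨F, hF⟩ := lt_iSup_iff.mp (show t - ε' < ⨆ s : Finset V, ∑ a ∈ s, f a by
      rw [← hiSup]; exact hlt)
    refine ⟨F, ?_⟩
    by_contra hcon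
    push_neg at hcon
    have hε'top : ε' ≠ ⊤ := fun h => hf (top_le_iff.mp (h ▸ hε't))
    have h2 : (t - ε') + ε' < (∑ w ∈ F, f w) + ε' := ENNReal.add_lt_add_right hε'top hF
    rw [tsub_add_cancel_of_le hε't] at h2
    have h3 : (∑ w ∈ F, f w) + ε' ≤ (∑ w ∈ F, f w) + ∑' w, (if w ∈ F then 0 else f w) := by
      gcongr
      exact le_trans (min_le_left _ _) hcon
    rw [← tsum_split_finset f F] at h3
    exact absurd (lt_of_lt_of_le h2 h3) (lt_irrefl t)

end Space
section Necessity

open scoped ENNReal NNReal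

variable {𝕜 : Type*} [RCLike 𝕜] {V : Type*} {X : Type*} [NormedAddCommGroup X]
  [NormedSpace 𝕜 X] {μ : V → 𝕜} {ι : X →ₗ[𝕜] V → 𝕜}

lemma tsum_level_succ (par : V → Option V) (c : V → ℝ≥0∞) (j : ℕ) (u : V) :
    (∑' w, (if parIter par (j+1) w = some u then c w else 0))
      = ∑' u', (if par u' = some u
          then (∑' w, (if parIter par j w = some u' then c w else 0)) else 0) := by
  symm
  have e1 : ∀ u' : V, (if par u' = some u
      then (∑' w, (if parIter par j w = some u' then c w else 0)) else 0)
      = ∑' w, (if par u' = some u ∧ parIter par j w = some u' then c w else 0) := by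
    intro u'
    by_cases h : par u' = some u
    · rw [if_pos h]
      exact tsum_congr fun w => by by_cases h2 : parIter par j w = some u' <;> simp [h, h2]
    · rw [if_neg h]
      exact ((tsum_congr fun w => by simp [h]).trans tsum_zero).symm
  calc (∑' u', (if par u' = some u
      then (∑' w, (if parIter par j w = some u' then c w else 0)) else 0))
      = ∑' (u' : V) (w : V), (if par u' = some u ∧ parIter par j w = some u'
          then c w else 0) := tsum_congr e1
    _ = ∑' (w : V) (u' : V), (if par u' = some u ∧ parIter par j w = some u'
          then c w else 0) := ENNReal.tsum_comm
    _ = ∑' w, (if parIter par (j+1) w = some u then c w else 0) := by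
        refine tsum_congr fun w => ?_
        have huniq : ∀ a b : V, (par a = some u ∧ parIter par j w = some a) →
            (par b = some u ∧ parIter par j w = some b) → a = b := by
          rintro a b ⟨_, ha⟩ ⟨_, hb⟩
          exact Option.some.inj (ha ▸ hb)
        have hiff : (∃ u', par u' = some u ∧ parIter par j w = some u')
            ↔ parIter par (j+1) w = some u := by
          rw [parIter_succ']
          cases hk : parIter par j w with
          | none => simp
          | some a =>
            simp only [Option.bind_some]
            constructor
            · rintro ⟨u', h1, h2⟩
              obtain rfl := Option.some.inj h2
              exact h1
            · intro h
              exact ⟨a, h, rfl⟩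
        have H := (tsum_ite_const_of_unique (c w) huniq).trans
          (if_congr hiff rfl rfl)
        convert H using 2
        funext u'
        congr

/-- Necessity: dense periodic points give, for every vertex, a branch with summable weights. -/
lemma necessity {par : V → Option V} {T : X →L[𝕜] X} [CompleteSpace X]
    (hTree : IsDirectedTree par)
    (hμ : ∀ v : V, μ v ≠ 0) (hX : IsLpSpaceRep ι μ 1)
    (hT : IsShiftRep par (fun _ : V => (1 : 𝕜)) ι T)
    (hDP : Dense {x : X | IsPeriodicPoint T x}) (v : V) :
    ∃ b : ℕ → V, IsBranch par v b ∧ (∑' n : ℕ, nw μ (b (n + 1))) < ⊤ := by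
  classical
  obtain ⟨e, he⟩ := exists_sing hX v (1 : 𝕜)
  have hμv : (0:ℝ) < ‖μ v‖ := norm_pos_iff.mpr (hμ v)
  obtain ⟨x, hxball, hxper⟩ := Metric.dense_iff.mp hDP e ‖μ v‖ hμv
  have hxv : ι x v ≠ 0 := by
    intro h0
    have h1 := coeff_norm_le hX (x - e) v
    have h2 : ι (x - e) v = -1 := by
      rw [map_sub]
      show ι x v - ι e v = -1
      rw [h0, he]; simp
    rw [h2, norm_neg, norm_one, one_mul] at h1
    have h3 : dist x e < ‖μ v‖ := Metric.mem_ball.mp hxball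
    rw [dist_eq_norm] at h3
    linarith
  obtain ⟨N, hN1, hNx⟩ := hxper
  obtain ⟨σ, hσ⟩ : ∃ σ : ℕ → V → ℝ≥0∞, ∀ j u,
      σ j u = ∑' w, (if parIter par j w = some u then (‖ι x w‖₊ : ℝ≥0∞) else 0) :=
    ⟨_, fun _ _ => rfl⟩
  have hσ0 : ∀ u, σ 0 u = (‖ι x u‖₊ : ℝ≥0∞) := by
    intro u
    rw [hσ]
    refine (tsum_eq_single u fun b hb => ?_).trans ?_
    · rw [if_neg]
      intro h
      exact hb (Option.some.inj h)
    · exact if_pos rfl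
  have hσs : ∀ j u, σ (j+1) u = ∑' u', (if par u' = some u then σ j u' else 0) := by
    intro j u
    rw [hσ, tsum_level_succ]
    exact tsum_congr fun u' => by rw [hσ]
  -- pointwise domination of iterates
  have hCp : ∀ (j : ℕ) (u : V), (‖ι ((T^j) x) u‖₊ : ℝ≥0∞) ≤ σ j u := by
    intro j
    induction j with
    | zero =>
      intro u
      rw [pow_zero, ContinuousLinearMap.one_apply, hσ0]
    | succ j ih =>
      intro u
      have h1 : HasSum (fun u' : ↥(children par u) => ι ((T^j) x) u'.1)
          (ι ((T^(j+1)) x) u) := by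
        rw [pow_succ', ContinuousLinearMap.mul_apply]
        exact shift_coeff hT ((T^j) x) u
      calc (‖ι ((T^(j+1)) x) u‖₊ : ℝ≥0∞)
          ≤ ∑' u' : ↥(children par u), (‖ι ((T^j) x) u'.1‖₊ : ℝ≥0∞) := enorm_hasSum_le h1
        _ ≤ ∑' u' : ↥(children par u), σ j u'.1 :=
            Summable.tsum_le_tsum (fun u' => ih u'.1) ENNReal.summable ENNReal.summable
        _ = ∑' u', (if par u' = some u then σ j u' else 0) := by
            rw [tsum_subtype (children par u) (fun u' => σ j u')]
            exact tsum_congr fun u' => by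
              rw [Set.indicator_apply]
              exact if_congr Iff.rfl rfl rfl
        _ = σ (j+1) u := (hσs j u).symm
  -- the modulus vector z = |x|
  obtain ⟨z, hz⟩ : ∃ z : X, ι z = fun w => ((‖ι x w‖ : ℝ) : 𝕜) := by
    refine mem_range_of_fin hX ?_
    have : ∀ w, (‖((‖ι x w‖ : ℝ) : 𝕜) * μ w‖₊ : ℝ≥0∞) = (‖ι x w * μ w‖₊ : ℝ≥0∞) := by
      intro w
      rw [nnnorm_mul, nnnorm_mul]
      congr 2
      ext
      rw [coe_nnnorm, coe_nnnorm, RCLike.norm_ofReal, abs_norm]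
    rw [tsum_congr this]
    exact l1_fin hX x
  have hB : ∀ (j : ℕ) (u : V), ∃ r : ℝ≥0,
      ι ((T^j) z) u = ((r : ℝ) : 𝕜) ∧ (r : ℝ≥0∞) = σ j u := by
    intro j
    induction j with
    | zero =>
      intro u
      refine ⟨‖ι x u‖₊, ?_, ?_⟩
      · rw [pow_zero, ContinuousLinearMap.one_apply, hz, coe_nnnorm]
      · rw [hσ0]
    | succ j ih =>
      choose r hr1 hr2 using ih
      intro u
      have h1 : HasSum (fun u' : ↥(children par u) => ι ((T^j) z) u'.1)
          (ι ((T^(j+1)) z) u) := by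
        rw [pow_succ', ContinuousLinearMap.mul_apply]
        exact shift_coeff hT ((T^j) z) u
      have h1' : HasSum (fun u' : ↥(children par u) => ((r u'.1 : ℝ) : 𝕜))
          (ι ((T^(j+1)) z) u) := by
        have he2 : (fun u' : ↥(children par u) => ι ((T^j) z) u'.1)
            = fun u' => ((r u'.1 : ℝ) : 𝕜) := funext fun u' => hr1 u'.1
        rw [← he2]; exact h1
      set s := ι ((T^(j+1)) z) u with hs
      have hre : HasSum (fun u' : ↥(children par u) => (r u'.1 : ℝ)) (RCLike.re s) := by
        have := h1'.mapL (RCLike.reCLM (K := 𝕜))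
        simpa [RCLike.ofReal_re] using this
      have him0 : RCLike.im s = 0 := by
        have := h1'.mapL (RCLike.imCLM (K := 𝕜))
        have h2 : HasSum (fun _ : ↥(children par u) => (0:ℝ)) (RCLike.im s) := by
          simpa [RCLike.ofReal_im] using this
        exact (h2.unique hasSum_zero)
      have hnn : 0 ≤ RCLike.re s :=
        hasSum_mono hasSum_zero hre fun u' => NNReal.coe_nonneg _
      refine ⟨(RCLike.re s).toNNReal, ?_, ?_⟩
      · apply RCLike.ext
        · rw [RCLike.ofReal_re, Real.coe_toNNReal _ hnn]
        · rw [RCLike.ofReal_im, him0]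
      · rw [hσs]
        have hcoe : ((RCLike.re s).toNNReal : ℝ) = RCLike.re s := Real.coe_toNNReal _ hnn
        have hreNN : HasSum (fun u' : ↥(children par u) => r u'.1) (RCLike.re s).toNNReal :=
          NNReal.hasSum_coe.mp (by rw [hcoe]; exact hre)
        have h3 : (∑' u' : ↥(children par u), (r u'.1 : ℝ≥0∞))
            = ((RCLike.re s).toNNReal : ℝ≥0∞) := ENNReal.tsum_coe_eq hreNN
        rw [← h3, tsum_subtype (children par u) (fun u' => (r u' : ℝ≥0∞))]
        refine tsum_congr fun u' => ?_
        rw [Set.indicator_apply]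
        refine (if_congr Iff.rfl rfl rfl).trans (if_congr Iff.rfl (hr2 u') rfl)
  have hσtop : ∀ j u, σ j u ≠ ⊤ := by
    intro j u
    obtain ⟨r, _, hr2⟩ := hB j u
    rw [← hr2]; exact ENNReal.coe_ne_top
  have hTz : ∀ j : ℕ, (∑' u, σ j u * (‖μ u‖₊ : ℝ≥0∞)) = (‖(T^j) z‖₊ : ℝ≥0∞) := by
    intro j
    rw [l1_norm hX ((T^j) z)]
    refine tsum_congr fun u => ?_
    obtain ⟨r, hr1, hr2⟩ := hB j u
    rw [hr1, ← hr2, nnnorm_mul]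
    have : ‖((r : ℝ) : 𝕜)‖₊ = r := by
      ext
      rw [coe_nnnorm, RCLike.norm_ofReal, abs_of_nonneg (NNReal.coe_nonneg r)]
    rw [this, ENNReal.coe_mul]
  -- set up the flow
  obtain ⟨Z, hZd⟩ : ∃ Z : V → ℝ≥0∞, ∀ u, Z u = ∑ j ∈ Finset.range N, σ j u :=
    ⟨_, fun _ => rfl⟩
  have hZtop : ∀ u, Z u ≠ ⊤ := by
    intro u; rw [hZd]
    exact (ENNReal.sum_lt_top.mpr fun j _ => lt_top_iff_ne_top.mpr (hσtop j u)).ne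
  have hchaux : ∀ u, (∑' u', (if par u' = some u then Z u' else 0))
      = ∑ j ∈ Finset.range N, σ (j+1) u := by
    intro u
    have h1 : ∀ u', (if par u' = some u then Z u' else 0)
        = ∑ j ∈ Finset.range N, (if par u' = some u then σ j u' else 0) := by
      intro u'
      by_cases h : par u' = some u
      · rw [if_pos h, hZd]
        exact Finset.sum_congr rfl fun j _ => (if_pos h).symm
      · rw [if_neg h]
        symm
        refine Finset.sum_eq_zero fun j _ => if_neg h
    rw [tsum_congr h1, Summable.tsum_finsetSum fun j _ => ENNReal.summable]
    exact Finset.sum_congr rfl fun j _ => (hσs j u).symm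
  have hch : ∀ u, (∑' u', (if par u' = some u then Z u' else 0)) ≠ ⊤ := by
    intro u
    rw [hchaux u]
    exact (ENNReal.sum_lt_top.mpr fun j _ => lt_top_iff_ne_top.mpr (hσtop (j+1) u)).ne
  have hsuper : ∀ u, Z u ≤ ∑' u', (if par u' = some u then Z u' else 0) := by
    intro u
    rw [hchaux u]
    have hA : σ 0 u + ∑ j ∈ Finset.range N, σ (j+1) u = Z u + σ N u := by
      rw [hZd, ← Finset.sum_range_succ, Finset.sum_range_succ']
      ring
    have hσN : σ 0 u ≤ σ N u := by
      rw [hσ0]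
      have := hCp N u
      rwa [hNx] at this
    have h2 : σ 0 u + Z u ≤ σ 0 u + ∑ j ∈ Finset.range N, σ (j+1) u := by
      rw [hA, add_comm (Z u) (σ N u)]
      exact add_le_add hσN le_rfl
    exact (ENNReal.add_le_add_iff_left (hσtop 0 u)).mp h2
  have hfin : (∑' u, Z u * (‖μ u‖₊ : ℝ≥0∞)) ≠ ⊤ := by
    have h1 : ∀ u, Z u * (‖μ u‖₊ : ℝ≥0∞)
        = ∑ j ∈ Finset.range N, σ j u * (‖μ u‖₊ : ℝ≥0∞) := by
      intro u; rw [hZd, Finset.sum_mul]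
    rw [tsum_congr h1, Summable.tsum_finsetSum fun j _ => ENNReal.summable]
    refine (ENNReal.sum_lt_top.mpr fun j _ => ?_).ne
    rw [hTz j]
    exact ENNReal.coe_lt_top
  have hZv : Z v ≠ 0 := by
    have h1 : σ 0 v ≤ Z v := by
      rw [hZd]
      exact Finset.single_le_sum (f := fun j => σ j v) (fun j _ => zero_le)
        (Finset.mem_range.mpr hN1)
    rw [hσ0] at h1
    intro h0
    rw [h0] at h1
    simp only [le_zero_iff, ENNReal.coe_eq_zero] at h1
    exact (nnnorm_ne_zero_iff.mpr hxv) h1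
  obtain ⟨b, hb, hbsum⟩ := flow_branch hTree (fun u => (‖μ u‖₊ : ℝ≥0∞)) Z hZtop hfin hch
    hsuper v hZv
  refine ⟨b, hb, ?_⟩
  have hle : (∑' n : ℕ, (‖μ (b (n+1))‖₊ : ℝ≥0∞)) ≤ ∑' n : ℕ, (‖μ (b n)‖₊ : ℝ≥0∞) :=
    ENNReal.tsum_comp_le_tsum_of_injective (add_left_injective 1)
      (fun n => (‖μ (b n)‖₊ : ℝ≥0∞))
  exact lt_of_le_of_lt hle (lt_top_iff_ne_top.mpr hbsum)

end Necessity
section Sufficiency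

open scoped ENNReal NNReal
open Filter

variable {𝕜 : Type*} [RCLike 𝕜] {V : Type*} {X : Type*} [NormedAddCommGroup X]
  [NormedSpace 𝕜 X] {μ : V → 𝕜} {ι : X →ₗ[𝕜] V → 𝕜}

lemma branch_parIter {par : V → Option V} {v : V} {b : ℕ → V} (hb : IsBranch par v b) :
    ∀ m n : ℕ, parIter par n (b (m + n)) = some (b m) := by
  intro m n
  induction n with
  | zero => rfl
  | succ n ih =>
    show (par (b (m + (n+1)))).bind (parIter par n) = some (b m)
    have hpar : par (b (m + n + 1)) = some (b (m + n)) := hb.2 (m + n)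
    have : m + (n + 1) = m + n + 1 := by omega
    rw [this, hpar, Option.bind_some, ih]

lemma branch_parIter0 {par : V → Option V} {v : V} {b : ℕ → V} (hb : IsBranch par v b)
    (n : ℕ) : parIter par n (b n) = some v := by
  have := branch_parIter hb 0 n
  rwa [Nat.zero_add, hb.1] at this

lemma exists_vanish {par : V → Option V} (hTree : IsDirectedTree par) {root : V}
    (hroot : IsRoot par root) (u : V) : ∀ᶠ n in atTop, parIter par n u = none := by
  obtain ⟨m, n, w, hm, hn⟩ := hTree.connected u root
  have hw : w = root := by
    cases n with
    | zero => exact (Option.some.inj hn).symm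
    | succ n =>
      exfalso
      have : parIter par (n+1) root = none := by
        show (par root).bind _ = none
        rw [hroot]; rfl
      rw [this] at hn
      cases hn
  subst hw
  have hm1 : parIter par (m + 1) u = none := by
    rw [parIter_succ', hm]
    exact hroot
  rw [eventually_atTop]
  exact ⟨m + 1, fun n hn => parIter_none_of hm1 hn⟩

/-- The basic periodic block supported along a branch. -/
lemma periodic_block [CompleteSpace X] {par : V → Option V} {T : X →L[𝕜] X}
    (hX : IsLpSpaceRep ι μ 1)
    {sing : V → 𝕜 → X} (hsing : ∀ u c, ι (sing u c) = fun w => if w = u then c else 0)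
    (hTn : ∀ (n : ℕ) (u : V) (c : 𝕜),
      (T^n) (sing u c) = (parIter par n u).elim 0 (fun w => sing w c))
    {v : V} {b : ℕ → V} (hb : IsBranch par v b)
    (hM : Summable fun n => ‖μ (b n)‖) (c : 𝕜) {N : ℕ} (hN : 1 ≤ N)
    (hvanish : parIter par N v = none) :
    ∃ p : X, (T^N) p = p ∧
      ‖p - sing v c‖ ≤ ‖c‖ * ∑' k, ‖μ (b (k + N))‖ := by
  have hnormsing : ∀ u d, ‖sing u d‖ = ‖d‖ * ‖μ u‖ := fun u d => norm_of_single' hX (hsing u d)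
  have hinj : Function.Injective (fun k : ℕ => k * N) := fun a b h => by
    exact Nat.eq_of_mul_eq_mul_right hN h
  have hMsum : Summable fun k => ‖sing (b (k * N)) c‖ := by
    have h1 : Summable fun k => ‖c‖ * ‖μ (b (k * N))‖ :=
      Summable.mul_left _ (hM.comp_injective hinj)
    exact h1.congr fun k => (hnormsing _ _).symm
  have hsummable : Summable fun k => sing (b (k * N)) c := hMsum.of_norm
  set p := ∑' k, sing (b (k * N)) c with hp
  have hTNsum : Summable fun k => (T^N) (sing (b (k * N)) c) :=
    hsummable.map ((T^N) : X →L[𝕜] X).toLinearMap.toAddMonoidHom (T^N).continuous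
  have hterm : ∀ k, (T^N) (sing (b (k * N)) c)
      = if k = 0 then 0 else sing (b ((k-1) * N)) c := by
    intro k
    cases k with
    | zero =>
      rw [hTn]
      have h0 : b (0 * N) = v := by rw [Nat.zero_mul, hb.1]
      rw [h0, hvanish]
      rfl
    | succ k =>
      rw [hTn]
      have h1 : (k+1) * N = k * N + N := by ring
      rw [h1, branch_parIter hb (k * N) N]
      simp
  have hTp : (T^N) p = p := by
    rw [hp, ContinuousLinearMap.map_tsum _ hsummable]
    have hsumh : Summable (fun k => if k = 0 then (0:X) else sing (b ((k-1) * N)) c) :=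
      hTNsum.congr hterm
    rw [tsum_congr hterm, Summable.tsum_eq_zero_add hsumh]
    rw [if_pos rfl, zero_add]
    apply tsum_congr
    intro k
    rw [if_neg (Nat.succ_ne_zero k)]
    simp
  refine ⟨p, hTp, ?_⟩
  have hp2 : p = sing (b (0 * N)) c + ∑' k, sing (b ((k+1) * N)) c := by
    rw [hp, Summable.tsum_eq_zero_add hsummable]
  have h0 : b (0 * N) = v := by rw [Nat.zero_mul, hb.1]
  have hdiff : p - sing v c = ∑' k, sing (b ((k+1) * N)) c := by
    rw [hp2, h0]; abel
  rw [hdiff]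
  have hinj2 : Function.Injective (fun k : ℕ => (k+1) * N) := by
    intro a b h
    simp only at h
    have := Nat.eq_of_mul_eq_mul_right hN h
    omega
  have hsum1 : Summable fun k => ‖sing (b ((k+1) * N)) c‖ := by
    have h1 : Summable fun k => ‖c‖ * ‖μ (b ((k+1) * N))‖ :=
      Summable.mul_left _ (hM.comp_injective hinj2)
    exact h1.congr fun k => (hnormsing _ _).symm
  calc ‖∑' k, sing (b ((k+1) * N)) c‖ ≤ ∑' k, ‖sing (b ((k+1) * N)) c‖ :=
        norm_tsum_le_tsum_norm hsum1
    _ = ∑' k, ‖c‖ * ‖μ (b ((k+1) * N))‖ := tsum_congr fun k => hnormsing _ _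
    _ = ‖c‖ * ∑' k, ‖μ (b ((k+1) * N))‖ := tsum_mul_left
    _ ≤ ‖c‖ * ∑' k, ‖μ (b (k + N))‖ := by
        refine mul_le_mul_of_nonneg_left ?_ (norm_nonneg c)
        refine Summable.tsum_le_tsum_of_inj (fun k => k * N)
          (fun a b h => Nat.eq_of_mul_eq_mul_right hN h)
          (fun c' _ => norm_nonneg _)
          (fun k => le_of_eq (by congr 1; ring))
          (hM.comp_injective hinj2) ((summable_nat_add_iff N).mpr hM)

end Sufficiency
section Main

open scoped ENNReal NNReal
open Filter

variable {𝕜 : Type*} [RCLike 𝕜] {V : Type*} {X : Type*} [NormedAddCommGroup X]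
  [NormedSpace 𝕜 X] {μ : V → 𝕜} {ι : X →ₗ[𝕜] V → 𝕜}

set_option maxHeartbeats 1000000 in
lemma sufficiency [CompleteSpace X] {par : V → Option V} {T : X →L[𝕜] X}
    (hTree : IsDirectedTree par) {root : V} (hroot : IsRoot par root)
    (hμ : ∀ v : V, μ v ≠ 0) (hX : IsLpSpaceRep ι μ 1)
    (hT : IsShiftRep par (fun _ : V => (1:𝕜)) ι T)
    (hcond : ∀ v : V, ∃ b : ℕ → V, IsBranch par v b ∧ (∑' n : ℕ, nw μ (b (n+1))) < ⊤) :
    ChaoticOp T := by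
  classical
  haveI : Countable V := hTree.countable
  choose bb hbb hbsum using hcond
  choose sing hsing using fun (u : V) (c : 𝕜) => exists_sing hX u c
  have hsing' : ∀ u c w, ι (sing u c) w = if w = u then c else 0 :=
    fun u c w => congrFun (hsing u c) w
  have hTsing : ∀ u c, T (sing u c) = (par u).elim 0 (fun w => sing w c) := by
    intro u c
    apply hX.1
    funext w
    rw [shift_single hT (hsing u c) w]
    cases hp : par u with
    | none =>
      rw [if_neg (by simp)]
      show (0:𝕜) = ι (0 : X) w
      rw [map_zero]
      rfl
    | some p =>
      show (if some p = some w then c else 0) = ι (sing p c) w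
      rw [hsing' p c w]
      by_cases hw : w = p
      · subst hw; rw [if_pos rfl, if_pos rfl]
      · rw [if_neg (fun h => hw (Option.some.inj h).symm), if_neg hw]
  have hTn : ∀ (n : ℕ) (u : V) (c : 𝕜),
      (T^n) (sing u c) = (parIter par n u).elim 0 (fun w => sing w c) := by
    intro n
    induction n with
    | zero => intro u c; rw [pow_zero, ContinuousLinearMap.one_apply]; rfl
    | succ n ih =>
      intro u c
      rw [pow_succ, ContinuousLinearMap.mul_apply, hTsing u c]
      cases hp : par u with
      | none =>
        have h2 : parIter par (n+1) u = none := by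
          show (par u).bind _ = none
          rw [hp]; rfl
        rw [h2]
        show (T^n) 0 = 0
        exact map_zero _
      | some p =>
        have h2 : parIter par (n+1) u = parIter par n p := by
          show (par u).bind _ = _
          rw [hp, Option.bind_some]
        rw [h2]
        exact ih p c
  have hM : ∀ v, Summable fun n => ‖μ (bb v n)‖ := by
    intro v
    have h1 : (∑' n : ℕ, ((‖μ (bb v (n+1))‖₊ : ℝ≥0) : ℝ≥0∞)) ≠ ⊤ := by
      have h0 := (hbsum v).ne
      simpa only [nw] using h0
    have h2 : Summable fun n => ‖μ (bb v (n+1))‖₊ := ENNReal.tsum_coe_ne_top_iff_summable.mp h1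
    have h3 : Summable fun n => ‖μ (bb v n)‖₊ := (NNReal.summable_nat_add_iff 1).mp h2
    exact (NNReal.summable_coe.mpr h3).congr fun n => coe_nnnorm _
  have hMz : ∀ v, Tendsto (fun n => ‖μ (bb v n)‖) atTop (𝓝 0) :=
    fun v => (hM v).tendsto_atTop_zero
  have hτ : ∀ v, Tendsto (fun N => ∑' k, ‖μ (bb v (k + N))‖) atTop (𝓝 0) :=
    fun v => tendsto_sum_nat_add (fun j => ‖μ (bb v j)‖)
  -- truncation
  have hTR : ∀ (a : X) (ε : ℝ), 0 < ε → ∃ F : Finset V,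
      ‖a - ∑ w ∈ F, sing w (ι a w)‖ < ε := by
    intro a ε hε
    obtain ⟨F, hF⟩ := tail_small (f := fun w => (‖ι a w * μ w‖₊ : ℝ≥0∞)) (l1_fin hX a)
      (ε := ENNReal.ofReal ε) (by simp [hε])
    refine ⟨F, norm_lt_of_ennreal ?_⟩
    have hcoeff : ∀ w', ι (a - ∑ w ∈ F, sing w (ι a w)) w'
        = if w' ∈ F then 0 else ι a w' := by
      intro w'
      rw [map_sub]
      have h1 : ι (∑ w ∈ F, sing w (ι a w)) w' = if w' ∈ F then ι a w' else 0 := by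
        rw [map_sum]
        have h2 : ∀ w ∈ F, (ι (sing w (ι a w))) w' = if w' = w then ι a w else 0 :=
          fun w _ => hsing' w (ι a w) w'
        calc (∑ w ∈ F, ι (sing w (ι a w))) w' = ∑ w ∈ F, (ι (sing w (ι a w))) w' := by
              rw [Finset.sum_apply]
          _ = ∑ w ∈ F, (if w' = w then ι a w else 0) := Finset.sum_congr rfl h2
          _ = if w' ∈ F then ι a w' else 0 := Finset.sum_ite_eq F w' (fun w => ι a w)
      show ι a w' - ι (∑ w ∈ F, sing w (ι a w)) w' = _
      rw [h1]
      by_cases h : w' ∈ F <;> simp [h]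
    have hnorm : (‖a - ∑ w ∈ F, sing w (ι a w)‖₊ : ℝ≥0∞)
        = ∑' w, (if w ∈ F then 0 else (‖ι a w * μ w‖₊ : ℝ≥0∞)) := by
      rw [l1_norm hX]
      refine tsum_congr fun w => ?_
      rw [hcoeff w]
      by_cases h : w ∈ F <;> simp [h]
    rw [hnorm]
    exact hF
  -- killing finitely supported vectors
  have hkill : ∀ F : Finset V, ∀ᶠ n in atTop, ∀ cf : V → 𝕜,
      (T^n) (∑ w ∈ F, sing w (cf w)) = 0 := by
    intro F
    have h1 : ∀ᶠ n in atTop, ∀ w ∈ F, parIter par n w = none := by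
      rw [Filter.eventually_all_finset]
      intro w _
      exact exists_vanish hTree hroot w
    filter_upwards [h1] with n hn cf
    rw [map_sum]
    refine Finset.sum_eq_zero fun w hw => ?_
    rw [hTn n w (cf w), hn w hw]
    rfl
  -- the shifted-back vectors
  have hshift : ∀ (G : Finset V) (cf : V → 𝕜) (n : ℕ),
      (T^n) (∑ w ∈ G, sing (bb w n) (cf w)) = ∑ w ∈ G, sing w (cf w) := by
    intro G cf n
    rw [map_sum]
    refine Finset.sum_congr rfl fun w _ => ?_
    rw [hTn n (bb w n) (cf w), branch_parIter0 (hbb w) n]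
    rfl
  have hshiftnorm : ∀ (G : Finset V) (cf : V → 𝕜),
      Tendsto (fun n => ‖∑ w ∈ G, sing (bb w n) (cf w)‖) atTop (𝓝 0) := by
    intro G cf
    have hb : ∀ n, ‖∑ w ∈ G, sing (bb w n) (cf w)‖
        ≤ ∑ w ∈ G, ‖cf w‖ * ‖μ (bb w n)‖ := by
      intro n
      calc ‖∑ w ∈ G, sing (bb w n) (cf w)‖ ≤ ∑ w ∈ G, ‖sing (bb w n) (cf w)‖ :=
            norm_sum_le _ _
        _ = ∑ w ∈ G, ‖cf w‖ * ‖μ (bb w n)‖ :=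
            Finset.sum_congr rfl fun w _ => norm_of_single' hX (hsing _ _)
    have hlim : Tendsto (fun n => ∑ w ∈ G, ‖cf w‖ * ‖μ (bb w n)‖) atTop (𝓝 0) := by
      have := tendsto_finset_sum G (fun w _ => (hMz w).const_mul ‖cf w‖)
      simpa using this
    exact squeeze_zero (fun n => norm_nonneg _) hb hlim
  -- countable dense subset of X
  obtain ⟨Q, hQc, hQd⟩ := TopologicalSpace.exists_countable_dense 𝕜
  haveI hQt : Countable ↥Q := hQc.to_subtype
  set D : Set X := ⋃ F : Finset V,
    Set.range (fun q : {w : V // w ∈ F} → ↥Q => ∑ w ∈ F.attach, sing w.1 (q w).1) with hD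
  have hDc : D.Countable := Set.countable_iUnion fun F => Set.countable_range _
  have hsingsub : ∀ u (c d : 𝕜), sing u c - sing u d = sing u (c - d) := by
    intro u c d
    apply hX.1
    funext w
    rw [map_sub]
    show ι (sing u c) w - ι (sing u d) w = ι (sing u (c-d)) w
    rw [hsing' u c w, hsing' u d w, hsing' u (c-d) w]
    by_cases h : w = u <;> simp [h]
  have hDd : Dense D := by
    rw [Metric.dense_iff]
    intro a r hr
    obtain ⟨F, hF⟩ := hTR a (r/2) (by linarith)
    have hq : ∀ w : {w : V // w ∈ F}, ∃ q : ↥Q,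
        ‖ι a w.1 - (q : 𝕜)‖ < (r/2) / (F.card + 1) / (‖μ w.1‖ + 1) := by
      intro w
      have hpos : (0:ℝ) < (r/2) / (F.card + 1) / (‖μ w.1‖ + 1) := by positivity
      obtain ⟨y, hy1, hy2⟩ := Metric.dense_iff.mp hQd (ι a w.1) _ hpos
      refine ⟨⟨y, hy2⟩, ?_⟩
      rw [← dist_eq_norm, dist_comm]
      exact Metric.mem_ball.mp hy1
    choose q hqd using hq
    refine ⟨∑ w ∈ F.attach, sing w.1 (q w).1, ?_, ?_⟩
    · rw [Metric.mem_ball, dist_eq_norm]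
      have hattach : (∑ w ∈ F.attach, sing w.1 (ι a w.1)) = ∑ w ∈ F, sing w (ι a w) :=
        Finset.sum_attach F (fun w => sing w (ι a w))
      have hsplit : (∑ w ∈ F.attach, sing w.1 (q w).1) - a
          = (∑ w ∈ F.attach, (sing w.1 (q w).1 - sing w.1 (ι a w.1)))
            - (a - ∑ w ∈ F, sing w (ι a w)) := by
        rw [Finset.sum_sub_distrib, hattach]
        abel
      rw [hsplit]
      have hterm : ∀ w : {w : V // w ∈ F},
          ‖sing w.1 (q w).1 - sing w.1 (ι a w.1)‖ ≤ (r/2) / (F.card + 1) := by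
        intro w
        rw [hsingsub, norm_of_single' hX (hsing _ _)]
        have h1 : ‖(q w : 𝕜) - ι a w.1‖ < (r/2) / (F.card + 1) / (‖μ w.1‖ + 1) := by
          rw [norm_sub_rev]; exact hqd w
        have h2 : (0:ℝ) < ‖μ w.1‖ + 1 := by positivity
        calc ‖(q w : 𝕜) - ι a w.1‖ * ‖μ w.1‖
            ≤ ((r/2) / (F.card + 1) / (‖μ w.1‖ + 1)) * (‖μ w.1‖ + 1) := by
              apply mul_le_mul h1.le (by linarith) (norm_nonneg _) (by positivity)
          _ = (r/2) / (F.card + 1) := div_mul_cancel₀ _ (ne_of_gt h2)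
      have hsum : ‖∑ w ∈ F.attach, (sing w.1 (q w).1 - sing w.1 (ι a w.1))‖
          ≤ (F.card : ℝ) * ((r/2) / (F.card + 1)) := by
        calc ‖∑ w ∈ F.attach, (sing w.1 (q w).1 - sing w.1 (ι a w.1))‖
            ≤ ∑ w ∈ F.attach, ‖sing w.1 (q w).1 - sing w.1 (ι a w.1)‖ := norm_sum_le _ _
          _ ≤ ∑ _w ∈ F.attach, (r/2) / (F.card + 1) :=
              Finset.sum_le_sum fun w _ => hterm w
          _ = (F.card : ℝ) * ((r/2) / (F.card + 1)) := by
              rw [Finset.sum_const, Finset.card_attach, nsmul_eq_mul]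
      have hlt : (F.card : ℝ) * ((r/2) / (F.card + 1)) < r/2 := by
        rw [mul_div_assoc', div_lt_iff₀ (by positivity : (0:ℝ) < (F.card:ℝ) + 1)]
        nlinarith [hr]
      calc ‖(∑ w ∈ F.attach, (sing w.1 (q w).1 - sing w.1 (ι a w.1)))
            - (a - ∑ w ∈ F, sing w (ι a w))‖
          ≤ ‖∑ w ∈ F.attach, (sing w.1 (q w).1 - sing w.1 (ι a w.1))‖
            + ‖a - ∑ w ∈ F, sing w (ι a w)‖ := norm_sub_le _ _
        _ < r/2 + r/2 := add_lt_add (lt_of_le_of_lt hsum hlt) hF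
        _ = r := by ring
    · exact Set.mem_iUnion.mpr ⟨F, ⟨q, rfl⟩⟩
  -- hypercyclicity via Baire
  have hHC : Hypercyclic T := by
    haveI : Nonempty X := ⟨0⟩
    haveI : Countable ↥D := hDc.to_subtype
    set A : ↥D × ℕ → Set X := fun pr =>
      ⋃ n : ℕ, (⇑(T^n)) ⁻¹' (Metric.ball (pr.1 : X) (1/(pr.2+1))) with hA
    have hAopen : ∀ pr, IsOpen (A pr) := fun pr =>
      isOpen_iUnion fun n => (Metric.isOpen_ball).preimage (T^n).continuous
    have hAdense : ∀ pr, Dense (A pr) := by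
      rintro ⟨d, m⟩
      rw [Metric.dense_iff]
      intro a r hr
      have hm1 : (0:ℝ) < 1/((m:ℝ)+1) := by positivity
      obtain ⟨F, hF⟩ := hTR a (r/2) (by linarith)
      obtain ⟨G, hG⟩ := hTR (d:X) (1/((m:ℝ)+1)) hm1
      have hev2 : ∀ᶠ n in atTop, ‖∑ w ∈ G, sing (bb w n) (ι (d:X) w)‖ < r/2 :=
        (hshiftnorm G (fun w => ι (d:X) w)).eventually_lt_const (by linarith)
      obtain ⟨n, hn1, hn2⟩ := ((hkill F).and hev2).exists
      refine ⟨(∑ w ∈ F, sing w (ι a w)) + ∑ w ∈ G, sing (bb w n) (ι (d:X) w), ?_, ?_⟩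
      · rw [Metric.mem_ball, dist_eq_norm]
        have hsp : (∑ w ∈ F, sing w (ι a w)) + (∑ w ∈ G, sing (bb w n) (ι (d:X) w)) - a
            = (∑ w ∈ G, sing (bb w n) (ι (d:X) w))
              - (a - ∑ w ∈ F, sing w (ι a w)) := by abel
        rw [hsp]
        calc ‖(∑ w ∈ G, sing (bb w n) (ι (d:X) w))
              - (a - ∑ w ∈ F, sing w (ι a w))‖
            ≤ ‖∑ w ∈ G, sing (bb w n) (ι (d:X) w)‖
              + ‖a - ∑ w ∈ F, sing w (ι a w)‖ := norm_sub_le _ _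
          _ < r/2 + r/2 := add_lt_add hn2 hF
          _ = r := by ring
      · refine Set.mem_iUnion.mpr ⟨n, ?_⟩
        show (T^n) _ ∈ Metric.ball (d:X) (1/((m:ℝ)+1))
        rw [map_add, hn1 (fun w => ι a w), hshift G (fun w => ι (d:X) w) n, zero_add]
        rw [Metric.mem_ball, dist_eq_norm, ← norm_sub_rev]
        exact hG
    have hGdense : Dense (⋂ pr, A pr) := dense_iInter_of_isOpen hAopen hAdense
    obtain ⟨x₀, hx₀⟩ := hGdense.nonempty
    refine ⟨x₀, ?_⟩
    rw [Metric.dense_iff]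
    intro y r hr
    obtain ⟨d, hd_ball, hdD⟩ := Metric.dense_iff.mp hDd y (r/2) (by linarith)
    obtain ⟨m, hm⟩ := exists_nat_one_div_lt (show (0:ℝ) < r/2 by linarith)
    have hx₀A := Set.mem_iInter.mp hx₀ ⟨⟨d, hdD⟩, m⟩
    obtain ⟨n, hn⟩ := Set.mem_iUnion.mp hx₀A
    have h1 : dist ((T^n) x₀) d < 1/((m:ℝ)+1) := Metric.mem_ball.mp hn
    have h2 : dist d y < r/2 := Metric.mem_ball.mp hd_ball
    refine ⟨(T^n) x₀, Metric.mem_ball.mpr ?_, ⟨n, rfl⟩⟩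
    calc dist ((T^n) x₀) y ≤ dist ((T^n) x₀) d + dist d y := dist_triangle _ _ _
      _ < 1/((m:ℝ)+1) + r/2 := add_lt_add h1 h2
      _ < r/2 + r/2 := by linarith [hm]
      _ = r := by ring
  -- dense periodic points
  have hPD : Dense {x : X | IsPeriodicPoint T x} := by
    rw [Metric.dense_iff]
    intro a r hr
    obtain ⟨F, hF⟩ := hTR a (r/2) (by linarith)
    have hev1 : ∀ᶠ N in atTop, ∀ w ∈ F, parIter par N w = none := by
      rw [Filter.eventually_all_finset]
      intro w _
      exact exists_vanish hTree hroot w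
    have hev2 : ∀ᶠ N in atTop,
        (∑ w ∈ F, ‖ι a w‖ * ∑' k, ‖μ (bb w (k + N))‖) < r/2 := by
      have hlim : Tendsto (fun N => ∑ w ∈ F, ‖ι a w‖ * ∑' k, ‖μ (bb w (k + N))‖)
          atTop (𝓝 0) := by
        have := tendsto_finset_sum F (fun w _ => (hτ w).const_mul ‖ι a w‖)
        simpa using this
      exact hlim.eventually_lt_const (by linarith)
    obtain ⟨N, hN1, hN2, hN3⟩ := (hev1.and (hev2.and (eventually_ge_atTop 1))).exists
    have hblocks : ∀ w : {w : V // w ∈ F}, ∃ p : X, (T^N) p = p ∧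
        ‖p - sing w.1 (ι a w.1)‖ ≤ ‖ι a w.1‖ * ∑' k, ‖μ (bb w.1 (k + N))‖ :=
      fun w => periodic_block hX hsing hTn (hbb w.1) (hM w.1) (ι a w.1) hN3 (hN1 w.1 w.2)
    choose P hP1 hP2 using hblocks
    have hTp : (T^N) (∑ w ∈ F.attach, P w) = ∑ w ∈ F.attach, P w := by
      rw [map_sum]
      exact Finset.sum_congr rfl fun w _ => hP1 w
    refine ⟨∑ w ∈ F.attach, P w, ?_, ⟨N, hN3, hTp⟩⟩
    rw [Metric.mem_ball, dist_eq_norm]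
    have hattach : (∑ w ∈ F.attach, sing w.1 (ι a w.1)) = ∑ w ∈ F, sing w (ι a w) :=
      Finset.sum_attach F (fun w => sing w (ι a w))
    have hsplit : (∑ w ∈ F.attach, P w) - a
        = (∑ w ∈ F.attach, (P w - sing w.1 (ι a w.1)))
          - (a - ∑ w ∈ F, sing w (ι a w)) := by
      rw [Finset.sum_sub_distrib, hattach]
      abel
    rw [hsplit]
    have h1 : ‖∑ w ∈ F.attach, (P w - sing w.1 (ι a w.1))‖ < r/2 := by
      calc ‖∑ w ∈ F.attach, (P w - sing w.1 (ι a w.1))‖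
          ≤ ∑ w ∈ F.attach, ‖P w - sing w.1 (ι a w.1)‖ := norm_sum_le _ _
        _ ≤ ∑ w ∈ F.attach, ‖ι a w.1‖ * ∑' k, ‖μ (bb w.1 (k + N))‖ :=
            Finset.sum_le_sum fun w _ => hP2 w
        _ = ∑ w ∈ F, ‖ι a w‖ * ∑' k, ‖μ (bb w (k + N))‖ :=
            Finset.sum_attach F (fun w => ‖ι a w‖ * ∑' k, ‖μ (bb w (k + N))‖)
        _ < r/2 := hN2
    calc ‖(∑ w ∈ F.attach, (P w - sing w.1 (ι a w.1)))
          - (a - ∑ w ∈ F, sing w (ι a w))‖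
        ≤ ‖∑ w ∈ F.attach, (P w - sing w.1 (ι a w.1))‖
          + ‖a - ∑ w ∈ F, sing w (ι a w)‖ := norm_sub_le _ _
      _ < r/2 + r/2 := add_lt_add h1 hF
      _ = r := by ring
  exact ⟨hHC, hPD⟩

end Main

/-- Theorem 7.3 / `t-char1mu`: on a leafless rooted tree, the unweighted
backward shift, as an operator on `ℓ^1(V,μ)`, is chaotic if and only if every vertex admits
a branch along which the weights are summable. -/
theorem statement11
    {𝕜 : Type*} [RCLike 𝕜] {V : Type*} (par : V → Option V) (hTree : IsDirectedTree par)
    (hLeafless : Leafless par) (root : V) (hroot : IsRoot par root)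
    (μ : V → 𝕜) (hμ : ∀ v : V, μ v ≠ 0)
    {X : Type*} [NormedAddCommGroup X] [NormedSpace 𝕜 X] [CompleteSpace X]
    (ι : X →ₗ[𝕜] V → 𝕜) (hX : IsLpSpaceRep ι μ 1)
    (T : X →L[𝕜] X) (hT : IsShiftRep par (fun _ : V => (1 : 𝕜)) ι T) :
    ChaoticOp T ↔
      ∀ v : V, ∃ b : ℕ → V, IsBranch par v b ∧
        (∑' n : ℕ, nw μ (b (n + 1))) < ⊤ := by
  constructor
  · intro hch
    exact fun v => necessity hTree hμ hX hT hch.2 v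
  · intro hcond
    exact sufficiency hTree hroot hμ hX hT hcond
end PaperTree
end

section
/- Let V be a countable set, μ=(μ_v)_{v∈V} a weight of nonzero scalars, and f_n∈c_0(V,μ), n≥1, sequences such that ‖f_n‖_{c_0(V,μ)}→0 as n→∞. Then there is a weight μ̃ on V with (μ_v/μ̃_v)_{v∈V}∈c_0(V) such that f_n∈c_0(V,μ̃) for all n≥1 and ‖f_n‖_{c_0(V,μ̃)}→0 as n→∞. -/
open scoped ENNReal NNReal Topology Classical
open Filter

namespace PaperTree

private lemma aux_pow (j : ℕ) : (2:ℝ)^(j+1) * (4:ℝ)⁻¹^j = 4 * (2:ℝ)⁻¹^(j+1) := by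
  have h : (2:ℝ) * 4⁻¹ = 2⁻¹ := by norm_num
  calc (2:ℝ)^(j+1) * 4⁻¹^j = 2 * ((2*4⁻¹)^j) := by rw [mul_pow, pow_succ]; ring
    _ = 2 * 2⁻¹^j := by rw [h]
    _ = 4 * 2⁻¹^(j+1) := by rw [pow_succ]; ring

/-- Lemma 8.5 / `l-char0mubil`: if `f_n ∈ c₀(V,μ)` with
`‖f_n‖_{c₀(V,μ)} → 0`, then there is a weight `μ̃` with `(μ_v/μ̃_v)_v ∈ c₀(V)` such that
`f_n ∈ c₀(V,μ̃)` for all `n` and `‖f_n‖_{c₀(V,μ̃)} → 0`. -/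
theorem statement15
    {𝕜 : Type*} [RCLike 𝕜] {V : Type*} [Countable V]
    (μ : V → 𝕜) (hμ : ∀ v : V, μ v ≠ 0) (f : ℕ → V → 𝕜)
    (hmem : ∀ n : ℕ, ∀ ε : ℝ, 0 < ε → {v : V | ε ≤ ‖f n v * μ v‖}.Finite)
    (hnorm : Tendsto (fun n : ℕ => ⨆ v : V, (‖f n v * μ v‖₊ : ℝ≥0∞)) atTop (𝓝 0)) :
    ∃ μt : V → 𝕜, (∀ v : V, μt v ≠ 0) ∧
      (∀ ε : ℝ, 0 < ε → {v : V | ε ≤ ‖μ v‖ / ‖μt v‖}.Finite) ∧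
      (∀ n : ℕ, ∀ ε : ℝ, 0 < ε → {v : V | ε ≤ ‖f n v * μt v‖}.Finite) ∧
      Tendsto (fun n : ℕ => ⨆ v : V, (‖f n v * μt v‖₊ : ℝ≥0∞)) atTop (𝓝 0) := by
  -- choose thresholds N k
  have h4 : ∀ k : ℕ, ∃ N : ℕ, ∀ n ≥ N, ∀ v, ‖f n v * μ v‖ ≤ (4:ℝ)⁻¹ ^ k := by
    intro k
    obtain ⟨N, hN⟩ := (ENNReal.tendsto_atTop_zero.mp hnorm)
      (ENNReal.ofReal ((4:ℝ)⁻¹ ^ k)) (ENNReal.ofReal_pos.mpr (by positivity))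
    refine ⟨N, fun n hn v => ?_⟩
    have h := le_trans (le_iSup (fun v => (‖f n v * μ v‖₊ : ℝ≥0∞)) v) (hN n hn)
    rwa [← @id (ENNReal.ofReal ‖f n v * μ v‖ = (‖f n v * μ v‖₊ : ℝ≥0∞)) (ofReal_norm (f n v * μ v)), ENNReal.ofReal_le_ofReal_iff (by positivity)] at h
  choose N hN using h4
  -- monotone majorant M
  set M : ℕ → ℕ := fun k => (Finset.range (k+1)).sum N + k with hM
  have hNM : ∀ k, N k ≤ M k := fun k =>
    le_trans (Finset.single_le_sum (fun i _ => Nat.zero_le _) (Finset.self_mem_range_succ k))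
      (Nat.le_add_right _ _)
  have hMmono : Monotone M := fun a b hab => by
    simp only [hM]
    exact Nat.add_le_add (Finset.sum_le_sum_of_subset
      (Finset.range_subset_range.mpr (by omega))) hab
  have hkM : ∀ k, k ≤ M k := fun k => Nat.le_add_left _ _
  -- enumeration
  obtain ⟨e, he⟩ := exists_injective_nat V
  -- the increasing family of finite sets
  set T : ℕ → Set V := fun k =>
    {v | e v ≤ k} ∪ ⋃ n ∈ Finset.range (M (k+1)), {v | (4:ℝ)⁻¹ ^ k ≤ ‖f n v * μ v‖}
    with hT
  have hTfin : ∀ k, (T k).Finite := by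
    intro k
    refine Set.Finite.union (Set.Finite.preimage he.injOn (Set.finite_Iic k)) ?_
    exact Set.Finite.biUnion (Finset.range (M (k+1))).finite_toSet
      (fun n _ => hmem n _ (by positivity))
  have hTmono : ∀ {j k : ℕ}, j ≤ k → T j ⊆ T k := by
    intro j k hjk v hv
    rcases hv with hv | hv
    · exact Or.inl (le_trans hv hjk)
    · right
      simp only [Set.mem_iUnion, Finset.mem_range] at hv ⊢
      obtain ⟨n, hn1, hn2⟩ := hv
      refine ⟨n, lt_of_lt_of_le hn1 (hMmono (by omega)), ?_⟩
      exact le_trans (pow_le_pow_of_le_one (by norm_num : (0:ℝ) ≤ 4⁻¹) (by norm_num : (4:ℝ)⁻¹ ≤ 1) hjk) hn2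
  have hTex : ∀ v : V, ∃ k, v ∈ T k := fun v => ⟨e v, Or.inl (Set.mem_setOf.mpr le_rfl)⟩
  set kk : V → ℕ := fun v => Nat.find (hTex v) with hkk
  have hkkmem : ∀ v, v ∈ T (kk v) := fun v => Nat.find_spec (hTex v)
  have hkknot : ∀ v, ∀ j < kk v, v ∉ T j := fun v => fun j hj => Nat.find_min (hTex v) hj
  -- kk v ≤ K implies v ∈ T K
  have hkkT : ∀ (K : ℕ) (v : V), kk v ≤ K → v ∈ T K := fun K v h => hTmono h (hkkmem v)
  -- key estimate when n < M (kk v), kk v ≥ 1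
  have hkey : ∀ (n : ℕ) (v : V), 0 < kk v → n < M (kk v) →
      ‖f n v * μ v‖ < (4:ℝ)⁻¹ ^ (kk v - 1) := by
    intro n v h1 h2
    by_contra hcon
    push_neg at hcon
    apply hkknot v (kk v - 1) (by omega)
    right
    simp only [Set.mem_iUnion, Finset.mem_range]
    refine ⟨n, ?_, hcon⟩
    rw [Nat.sub_add_cancel h1]
    exact h2
  -- the new weight
  refine ⟨fun v => (2:𝕜) ^ (kk v) * μ v, ?_, ?_, ?_, ?_⟩
  · exact fun v => mul_ne_zero (pow_ne_zero _ two_ne_zero) (hμ v)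
  · -- (μ/μt) ∈ c₀
    intro ε hε
    obtain ⟨K, hK⟩ := exists_pow_lt_of_lt_one hε (show (2:ℝ)⁻¹ < 1 by norm_num)
    refine (hTfin K).subset ?_
    intro v hv
    simp only [Set.mem_setOf_eq, norm_mul, norm_pow] at hv
    have h2 : ‖(2:𝕜)‖ = 2 := by simp
    rw [h2] at hv
    have hμv : (0:ℝ) < ‖μ v‖ := norm_pos_iff.mpr (hμ v)
    have hratio : ‖μ v‖ / (2 ^ kk v * ‖μ v‖) = (2:ℝ)⁻¹ ^ kk v := by
      rw [div_eq_iff (by positivity), inv_pow]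
      field_simp
    rw [hratio] at hv
    have : kk v ≤ K := by
      by_contra hcon
      push_neg at hcon
      have := lt_of_le_of_lt hv (lt_of_le_of_lt
        (pow_le_pow_of_le_one (by norm_num) (by norm_num) hcon.le) hK)
      exact absurd this (lt_irrefl _)
    exact hkkT K v this
  · -- each f n ∈ c₀(μt)
    intro n ε hε
    obtain ⟨K0, hK0⟩ := exists_pow_lt_of_lt_one (show (0:ℝ) < ε/4 by positivity)
      (show (2:ℝ)⁻¹ < 1 by norm_num)
    set K := max n K0 with hKdef
    refine (hTfin K).subset ?_
    intro v hv
    simp only [Set.mem_setOf_eq] at hv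
    by_contra hcon
    have hm : K < kk v := by
      by_contra h'; push_neg at h'; exact hcon (hkkT K v h')
    set m := kk v with hmdef
    have hm1 : 0 < m := by omega
    have hnm : n < M m := lt_of_lt_of_le (by omega) (hkM m)
    have hlt := hkey n v hm1 hnm
    have hnormeq : ‖f n v * ((2:𝕜) ^ m * μ v)‖ = 2 ^ m * ‖f n v * μ v‖ := by
      rw [show f n v * ((2:𝕜) ^ m * μ v) = (2:𝕜) ^ m * (f n v * μ v) by ring,
        norm_mul, norm_pow]
      simp
    rw [hnormeq] at hv
    have hx : (2:ℝ) ^ m * ‖f n v * μ v‖ < 2 ^ m * (4:ℝ)⁻¹ ^ (m - 1) :=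
      mul_lt_mul_of_pos_left hlt (by positivity)
    have harith : (2:ℝ) ^ m * (4:ℝ)⁻¹ ^ (m - 1) = 4 * (2:ℝ)⁻¹ ^ m := by
      obtain ⟨j, hj⟩ : ∃ j, m = j + 1 := ⟨m - 1, by omega⟩
      rw [hj, Nat.add_sub_cancel]
      exact aux_pow j
    rw [harith] at hx
    have h5 : (2:ℝ)⁻¹ ^ m ≤ (2:ℝ)⁻¹ ^ (K0 + 1) :=
      pow_le_pow_of_le_one (by norm_num) (by norm_num) (by omega)
    have h6 : (4:ℝ) * (2:ℝ)⁻¹ ^ (K0 + 1) = 2 * (2:ℝ)⁻¹ ^ K0 := by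
      rw [pow_succ]; ring
    nlinarith [hv, hx, hK0]
  · -- tendsto 0
    have hbound : ∀ (k n : ℕ), M k ≤ n → ∀ v,
        ‖f n v * ((2:𝕜) ^ (kk v) * μ v)‖ ≤ 2 * (2:ℝ)⁻¹ ^ k := by
      intro k n hn v
      set m := kk v with hmdef
      have hnormeq : ‖f n v * ((2:𝕜) ^ m * μ v)‖ = 2 ^ m * ‖f n v * μ v‖ := by
        rw [show f n v * ((2:𝕜) ^ m * μ v) = (2:𝕜) ^ m * (f n v * μ v) by ring,
          norm_mul, norm_pow]
        simp
      rw [hnormeq]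
      have hpow : ∀ j : ℕ, (2:ℝ) ^ j * (4:ℝ)⁻¹ ^ j = (2:ℝ)⁻¹ ^ j := by
        intro j; rw [← mul_pow]; norm_num
      rcases le_or_gt m k with hmk | hmk
      · -- use the level-k estimate
        have hb := hN k n (le_trans (hNM k) hn) v
        have : (2:ℝ) ^ m * ‖f n v * μ v‖ ≤ 2 ^ k * (4:ℝ)⁻¹ ^ k := by
          apply mul_le_mul (pow_le_pow_right₀ (by norm_num) hmk) hb (norm_nonneg _)
            (by positivity)
        rw [hpow k] at this
        nlinarith [pow_pos (show (0:ℝ) < 2⁻¹ by norm_num) k]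
      · rcases le_or_gt (M m) n with hMn | hMn
        · -- n beyond M m: level-m estimate
          have hb := hN m n (le_trans (hNM m) hMn) v
          have : (2:ℝ) ^ m * ‖f n v * μ v‖ ≤ 2 ^ m * (4:ℝ)⁻¹ ^ m :=
            mul_le_mul_of_nonneg_left hb (by positivity)
          rw [hpow m] at this
          have h5 : (2:ℝ)⁻¹ ^ m ≤ (2:ℝ)⁻¹ ^ k :=
            pow_le_pow_of_le_one (by norm_num) (by norm_num) hmk.le
          nlinarith [pow_pos (show (0:ℝ) < 2⁻¹ by norm_num) k]
        · -- n < M m : key estimate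
          have hlt := hkey n v (by omega) hMn
          have hx : (2:ℝ) ^ m * ‖f n v * μ v‖ ≤ 2 ^ m * (4:ℝ)⁻¹ ^ (m - 1) :=
            mul_le_mul_of_nonneg_left hlt.le (by positivity)
          have harith : (2:ℝ) ^ m * (4:ℝ)⁻¹ ^ (m - 1) = 4 * (2:ℝ)⁻¹ ^ m := by
            obtain ⟨j, hj⟩ : ∃ j, m = j + 1 := ⟨m - 1, by omega⟩
            rw [hj, Nat.add_sub_cancel]
            exact aux_pow j
          rw [harith] at hx
          have h5 : (2:ℝ)⁻¹ ^ m ≤ (2:ℝ)⁻¹ ^ (k + 1) :=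
            pow_le_pow_of_le_one (by norm_num) (by norm_num) (by omega)
          have h6 : (4:ℝ) * (2:ℝ)⁻¹ ^ (k + 1) = 2 * (2:ℝ)⁻¹ ^ k := by
            rw [pow_succ]; ring
          nlinarith
    rw [ENNReal.tendsto_atTop_zero]
    intro ε hε
    obtain ⟨k, hk⟩ := ENNReal.exists_inv_two_pow_lt hε.ne'
    refine ⟨M (k + 2), fun n hn => ?_⟩
    refine iSup_le fun v => ?_
    have hb := hbound (k + 2) n hn v
    calc (‖f n v * ((2:𝕜) ^ (kk v) * μ v)‖₊ : ℝ≥0∞)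
        = ENNReal.ofReal ‖f n v * ((2:𝕜) ^ (kk v) * μ v)‖ :=
          (ofReal_norm _).symm
      _ ≤ ENNReal.ofReal (2 * (2:ℝ)⁻¹ ^ (k + 2)) := ENNReal.ofReal_le_ofReal hb
      _ = ENNReal.ofReal ((2:ℝ)⁻¹ ^ (k + 1)) := by
          rw [pow_succ]; ring_nf
      _ = (2⁻¹ : ℝ≥0∞) ^ (k + 1) := by
          rw [ENNReal.ofReal_pow (by norm_num), ENNReal.ofReal_inv_of_pos (by norm_num),
            ENNReal.ofReal_ofNat]
      _ ≤ (2⁻¹ : ℝ≥0∞) ^ k := pow_le_pow_of_le_one (by norm_num) (by norm_num) (by omega)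
      _ ≤ ε := hk.le
end PaperTree
end
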